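/- For the quasihomogeneous surface singularity x^p + y^{pk} + z² with p even, the signature invariants of the Milnor lattice are μ₀ = p − 2, μ₊ = ((p−2)/2)(pk/2 − 2), μ₋ = (3p−2)pk/4 − (p−1); in particular μ₀ + μ₊ + μ₋ = (p−1)(pk−1). -/

import Mathlib

open Finset

private lemma floorNatDiv (n d : ℕ) : ⌊(n : ℚ) / (d : ℚ)⌋ = ((n / d : ℕ) : ℤ) := by
  have h := Rat.floor_intCast_div_natCast (n : ℤ) d
  rw [show (((n : ℤ)) : ℚ) = (n : ℚ) by push_cast; rfl] at h
  rw [h, Int.natCast_div]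

private lemma denNatDiv (n d : ℕ) (hd : 0 < d) : ((n : ℚ) / (d : ℚ)).den = 1 ↔ d ∣ n := by
  have hd0 : (d : ℚ) ≠ 0 := Nat.cast_ne_zero.mpr hd.ne'
  constructor
  · intro h
    have hnum : ((((n : ℚ) / d).num : ℤ) : ℚ) = (n : ℚ) / d := (Rat.den_eq_one_iff _).mp h
    have h2 : (n : ℚ) = (((n : ℚ) / d).num : ℚ) * d := by
      rw [hnum]; field_simp
    have h3 : (n : ℤ) = ((n : ℚ) / d).num * d := by exact_mod_cast h2
    have h4 : (d : ℤ) ∣ (n : ℤ) := ⟨((n : ℚ) / d).num, by linarith⟩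
    exact_mod_cast h4
  · rintro ⟨c, rfl⟩
    push_cast
    rw [mul_comm, mul_div_assoc, div_self hd0, mul_one]
    exact Rat.den_natCast c

private lemma dvdChar (K s : ℕ) (hK : 1 ≤ K) (hs1 : 1 ≤ s) (hs2 : s < 4 * K) :
    2 * K ∣ s + K ↔ (s = K ∨ s = 3 * K) := by
  constructor
  · rintro ⟨c, hc⟩
    have h3 : c < 3 := by
      by_contra hcon
      push_neg at hcon
      have : 2 * K * 3 ≤ 2 * K * c := Nat.mul_le_mul_left _ hcon
      omega
    interval_cases c <;> omega
  · rintro (rfl | rfl)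
    · exact ⟨1, by ring⟩
    · exact ⟨2, by ring⟩

private lemma evenChar (K s : ℕ) (hK : 1 ≤ K) (hs1 : 1 ≤ s) (hs2 : s < 4 * K)
    (hnd : ¬ 2 * K ∣ s + K) : (Even ((s + K) / (2 * K)) ↔ (s < K ∨ 3 * K < s)) := by
  have hne1 : s ≠ K := by rintro rfl; exact hnd ⟨1, by ring⟩
  have hne3 : s ≠ 3 * K := by rintro rfl; exact hnd ⟨2, by ring⟩
  rcases lt_trichotomy s K with h | h | h
  · have hq : (s + K) / (2 * K) = 0 := Nat.div_eq_of_lt (by omega)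
    rw [hq, Nat.even_iff]; omega
  · omega
  · rcases lt_trichotomy s (3 * K) with h2 | h2 | h2
    · have hq : (s + K) / (2 * K) = 1 := Nat.div_eq_of_lt_le (by omega) (by omega)
      rw [hq, Nat.even_iff]; omega
    · omega
    · have hq : (s + K) / (2 * K) = 2 := Nat.div_eq_of_lt_le (by omega) (by omega)
      rw [hq, Nat.even_iff]; omega

private lemma cardFilterProd (A B : Finset ℕ) (P : ℕ × ℕ → Prop) [DecidablePred P] :
    ((A ×ˢ B).filter P).card = ∑ a ∈ A, (B.filter fun b => P (a, b)).card := by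
  rw [Finset.card_filter, Finset.sum_product]
  exact Finset.sum_congr rfl fun a _ => (Finset.card_filter _ _).symm

private lemma sumAux (k : ℕ) (hk : 1 ≤ k) (n : ℕ) :
    2 * (∑ i ∈ Finset.range n, (k * (i + 1) - 1)) = k * n * (n + 1) - 2 * n := by
  induction n with
  | zero => simp
  | succ n ih =>
    rw [Finset.sum_range_succ]
    have e1 : k * (n + 1) * (n + 1 + 1) = k * n * (n + 1) + 2 * (k * (n + 1)) := by ring
    have e2 : 1 ≤ k * (n + 1) := Nat.one_le_iff_ne_zero.mpr (by positivity)
    have e3 : 2 * n ≤ k * n * (n + 1) := by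
      rcases Nat.eq_zero_or_pos n with rfl | hn
      · simp
      · have h4 := Nat.mul_le_mul (Nat.le_mul_of_pos_left n hk) (show 2 ≤ n + 1 by omega)
        omega
    omega

theorem stmt_12 (p k : ℕ) (hp : 2 ≤ p) (hpeven : Even p) (hk : 1 ≤ k) :
    let ℓ : ℕ × ℕ → ℚ :=
      fun ab => ((ab.1 : ℚ) + 1) / p + ((ab.2 : ℚ) + 1) / (p * k) + 1/2
    let S := Finset.range (p - 1) ×ˢ Finset.range (p * k - 1)
    ((S.filter (fun ab => (ℓ ab).den = 1)).card = p - 2) ∧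
    ((S.filter (fun ab => (ℓ ab).den ≠ 1 ∧ Even ⌊ℓ ab⌋)).card
        = ((p - 2) / 2) * (p * k / 2 - 2)) ∧
    ((S.filter (fun ab => (ℓ ab).den ≠ 1 ∧ ¬ Even ⌊ℓ ab⌋)).card
        = (3 * p - 2) * p * k / 4 - (p - 1)) ∧
    ((p - 2) + ((p - 2) / 2) * (p * k / 2 - 2)
        + ((3 * p - 2) * p * k / 4 - (p - 1)) = (p - 1) * (p * k - 1)) := by
  intro ℓ S
  obtain ⟨m, hmm⟩ := hpeven
  obtain ⟨m', rfl⟩ : ∃ m', m = m' + 1 := ⟨m - 1, by omega⟩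
  have hm2 : p = 2 * (m' + 1) := by omega
  -- abbreviations (as plain facts, products kept in canonical syntactic form)
  have hX1 : m' + 1 ≤ k * (m' + 1) := Nat.le_mul_of_pos_left (m' + 1) hk
  have hK1 : 1 ≤ k * (m' + 1) := by omega
  have hpk : p * k = 2 * (k * (m' + 1)) := by rw [hm2]; ring
  have hSdef : S = Finset.range (2 * (m' + 1) - 1) ×ˢ Finset.range (2 * (k * (m' + 1)) - 1) := by
    show Finset.range (p - 1) ×ˢ Finset.range (p * k - 1) = _
    rw [show p - 1 = 2 * (m' + 1) - 1 by omega, show p * k - 1 = 2 * (k * (m' + 1)) - 1 by omega]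
  have hl : ∀ ab : ℕ × ℕ, ℓ ab
      = (((k * (ab.1 + 1) + (ab.2 + 1) + k * (m' + 1)) : ℕ) : ℚ)
        / (((2 * (k * (m' + 1))) : ℕ) : ℚ) := by
    intro ab
    show ((ab.1 : ℚ) + 1) / p + ((ab.2 : ℚ) + 1) / (p * k) + 1/2 = _
    have hk0 : (k : ℚ) ≠ 0 := Nat.cast_ne_zero.mpr (by omega)
    have hm0 : ((m' : ℚ) + 1) ≠ 0 := by positivity
    rw [hm2]
    push_cast
    field_simp
  have hden : ∀ ab : ℕ × ℕ, ((ℓ ab).den = 1 ↔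
      2 * (k * (m' + 1)) ∣ (k * (ab.1 + 1) + (ab.2 + 1)) + k * (m' + 1)) := by
    intro ab
    rw [hl ab]
    exact denNatDiv _ _ (by omega)
  have hfloor : ∀ ab : ℕ × ℕ, ⌊ℓ ab⌋
      = ((((k * (ab.1 + 1) + (ab.2 + 1)) + k * (m' + 1)) / (2 * (k * (m' + 1))) : ℕ) : ℤ) := by
    intro ab
    rw [hl ab]
    exact floorNatDiv _ _
  -- bounds for members of S
  have hbnd : ∀ ab : ℕ × ℕ, ab ∈ S →
      ab.1 < 2 * (m' + 1) - 1 ∧ ab.2 < 2 * (k * (m' + 1)) - 1 ∧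
      k * (ab.1 + 1) + k ≤ 2 * (k * (m' + 1)) := by
    intro ab hab
    rw [hSdef, Finset.mem_product, Finset.mem_range, Finset.mem_range] at hab
    refine ⟨hab.1, hab.2, ?_⟩
    have h1 : k * (ab.1 + 1 + 1) ≤ k * (2 * (m' + 1)) := Nat.mul_le_mul_left k (by omega)
    have h2 : k * (ab.1 + 1 + 1) = k * (ab.1 + 1) + k := by ring
    have h3 : k * (2 * (m' + 1)) = 2 * (k * (m' + 1)) := by ring
    omega
  have hsbnd : ∀ ab : ℕ × ℕ, ab ∈ S →
      1 ≤ k * (ab.1 + 1) + (ab.2 + 1) ∧ k * (ab.1 + 1) + (ab.2 + 1) < 4 * (k * (m' + 1)) := by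
    intro ab hab
    obtain ⟨h1, h2, h3⟩ := hbnd ab hab
    omega
  -- useful multiplication-splitting fact
  have hx : ∀ u v : ℕ, u ≤ v → k * u + k * (v - u) = k * v := by
    intro u v huv
    rw [← Nat.mul_add]
    congr 1
    omega
  -- ### count for μ₀
  have hc0 : (S.filter (fun ab => (ℓ ab).den = 1)).card = 2 * (m' + 1) - 2 := by
    have hfe : S.filter (fun ab => (ℓ ab).den = 1)
        = S.filter (fun ab => k * (ab.1 + 1) + (ab.2 + 1) = k * (m' + 1)
            ∨ k * (ab.1 + 1) + (ab.2 + 1) = 3 * (k * (m' + 1))) := by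
      apply Finset.filter_congr
      intro ab hab
      obtain ⟨hs1, hs2⟩ := hsbnd ab hab
      rw [hden ab]
      exact dvdChar _ _ hK1 hs1 hs2
    rw [hfe, hSdef, cardFilterProd]
    have hterm : ∀ a ∈ Finset.range (2 * (m' + 1) - 1),
        ((Finset.range (2 * (k * (m' + 1)) - 1)).filter
          (fun b => k * (a + 1) + (b + 1) = k * (m' + 1)
            ∨ k * (a + 1) + (b + 1) = 3 * (k * (m' + 1)))).card
        = if a = m' then 0 else 1 := by
      intro a ha
      rw [Finset.mem_range] at ha
      by_cases h1 : a + 1 < m' + 1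
      · have key : k * (a + 1) + k * ((m' + 1) - (a + 1)) = k * (m' + 1) := hx _ _ (by omega)
        have hk2 : k ≤ k * ((m' + 1) - (a + 1)) := Nat.le_mul_of_pos_right k (by omega)
        rw [if_neg (by omega)]
        have hset : (Finset.range (2 * (k * (m' + 1)) - 1)).filter
            (fun b => k * (a + 1) + (b + 1) = k * (m' + 1)
              ∨ k * (a + 1) + (b + 1) = 3 * (k * (m' + 1)))
            = {k * (m' + 1) - k * (a + 1) - 1} := by
          ext b
          simp only [Finset.mem_filter, Finset.mem_range, Finset.mem_singleton]
          omega
        rw [hset, Finset.card_singleton]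
      · by_cases h2 : a + 1 = m' + 1
        · rw [if_pos (by omega)]
          have hA : k * (a + 1) = k * (m' + 1) := by rw [h2]
          have hset : (Finset.range (2 * (k * (m' + 1)) - 1)).filter
              (fun b => k * (a + 1) + (b + 1) = k * (m' + 1)
                ∨ k * (a + 1) + (b + 1) = 3 * (k * (m' + 1)))
              = ∅ := by
            ext b
            simp only [Finset.mem_filter, Finset.mem_range, Finset.notMem_empty, iff_false,
              not_and, not_or]
            omega
          rw [hset, Finset.card_empty]
        · have key : k * (m' + 1) + k * ((a + 1) - (m' + 1)) = k * (a + 1) := hx _ _ (by omega)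
          have hk2 : k ≤ k * ((a + 1) - (m' + 1)) := Nat.le_mul_of_pos_right k (by omega)
          have key2 : k * (a + 1) + k * (2 * (m' + 1) - (a + 1)) = k * (2 * (m' + 1)) :=
            hx _ _ (by omega)
          have hk3 : k ≤ k * (2 * (m' + 1) - (a + 1)) := Nat.le_mul_of_pos_right k (by omega)
          have h2m : k * (2 * (m' + 1)) = 2 * (k * (m' + 1)) := by ring
          rw [if_neg (by omega)]
          have hset : (Finset.range (2 * (k * (m' + 1)) - 1)).filter
              (fun b => k * (a + 1) + (b + 1) = k * (m' + 1)
                ∨ k * (a + 1) + (b + 1) = 3 * (k * (m' + 1)))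
              = {3 * (k * (m' + 1)) - k * (a + 1) - 1} := by
            ext b
            simp only [Finset.mem_filter, Finset.mem_range, Finset.mem_singleton]
            omega
          rw [hset, Finset.card_singleton]
    rw [Finset.sum_congr rfl hterm]
    have hmem : m' ∈ Finset.range (2 * (m' + 1) - 1) := by
      rw [Finset.mem_range]; omega
    rw [Finset.sum_eq_sum_sdiff_singleton_add hmem]
    have hone : ∀ x ∈ Finset.range (2 * (m' + 1) - 1) \ {m'},
        (if x = m' then 0 else 1) = 1 := by
      intro x hxm
      rw [Finset.mem_sdiff, Finset.mem_singleton] at hxm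
      exact if_neg hxm.2
    rw [Finset.sum_congr rfl hone, Finset.sum_const, smul_eq_mul, mul_one, if_pos rfl,
      Finset.card_sdiff_of_subset (Finset.singleton_subset_iff.mpr hmem), Finset.card_singleton,
      Finset.card_range]
    omega
  -- ### count for μ₊
  have hcP : (S.filter (fun ab => (ℓ ab).den ≠ 1 ∧ Even ⌊ℓ ab⌋)).card
      = k * m' * (m' + 1) - 2 * m' := by
    have hfe : S.filter (fun ab => (ℓ ab).den ≠ 1 ∧ Even ⌊ℓ ab⌋)
        = S.filter (fun ab => k * (ab.1 + 1) + (ab.2 + 1) < k * (m' + 1)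
            ∨ 3 * (k * (m' + 1)) < k * (ab.1 + 1) + (ab.2 + 1)) := by
      apply Finset.filter_congr
      intro ab hab
      obtain ⟨hs1, hs2⟩ := hsbnd ab hab
      rw [hfloor ab, Int.even_coe_nat]
      constructor
      · rintro ⟨h1, h2⟩
        have h1' : ¬ 2 * (k * (m' + 1)) ∣ (k * (ab.1 + 1) + (ab.2 + 1)) + k * (m' + 1) :=
          fun hd => h1 ((hden ab).mpr hd)
        exact (evenChar _ _ hK1 hs1 hs2 h1').mp h2
      · intro h
        have hnd : ¬ 2 * (k * (m' + 1)) ∣ (k * (ab.1 + 1) + (ab.2 + 1)) + k * (m' + 1) := by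
          intro hdvd
          rcases (dvdChar _ _ hK1 hs1 hs2).mp hdvd with h' | h' <;> omega
        exact ⟨fun hd1 => hnd ((hden ab).mp hd1), (evenChar _ _ hK1 hs1 hs2 hnd).mpr h⟩
    rw [hfe, hSdef, cardFilterProd]
    have hterm : ∀ a ∈ Finset.range (2 * (m' + 1) - 1),
        ((Finset.range (2 * (k * (m' + 1)) - 1)).filter
          (fun b => k * (a + 1) + (b + 1) < k * (m' + 1)
            ∨ 3 * (k * (m' + 1)) < k * (a + 1) + (b + 1))).card
        = (if a + 1 < m' + 1 then k * (m' + 1) - k * (a + 1) - 1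
            else if a + 1 = m' + 1 then 0 else k * (a + 1) - k * (m' + 1) - 1) := by
      intro a ha
      rw [Finset.mem_range] at ha
      by_cases h1 : a + 1 < m' + 1
      · have key : k * (a + 1) + k * ((m' + 1) - (a + 1)) = k * (m' + 1) := hx _ _ (by omega)
        have hk2 : k ≤ k * ((m' + 1) - (a + 1)) := Nat.le_mul_of_pos_right k (by omega)
        rw [if_pos h1]
        have hset : (Finset.range (2 * (k * (m' + 1)) - 1)).filter
            (fun b => k * (a + 1) + (b + 1) < k * (m' + 1)
              ∨ 3 * (k * (m' + 1)) < k * (a + 1) + (b + 1))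
            = Finset.range (k * (m' + 1) - k * (a + 1) - 1) := by
          ext b
          simp only [Finset.mem_filter, Finset.mem_range]
          omega
        rw [hset, Finset.card_range]
      · by_cases h2 : a + 1 = m' + 1
        · rw [if_neg h1, if_pos h2]
          have hA : k * (a + 1) = k * (m' + 1) := by rw [h2]
          have hset : (Finset.range (2 * (k * (m' + 1)) - 1)).filter
              (fun b => k * (a + 1) + (b + 1) < k * (m' + 1)
                ∨ 3 * (k * (m' + 1)) < k * (a + 1) + (b + 1))
              = ∅ := by
            ext b
            simp only [Finset.mem_filter, Finset.mem_range, Finset.notMem_empty, iff_false,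
              not_and, not_or, not_lt]
            omega
          rw [hset, Finset.card_empty]
        · have key : k * (m' + 1) + k * ((a + 1) - (m' + 1)) = k * (a + 1) := hx _ _ (by omega)
          have hk2 : k ≤ k * ((a + 1) - (m' + 1)) := Nat.le_mul_of_pos_right k (by omega)
          have key2 : k * (a + 1) + k * (2 * (m' + 1) - (a + 1)) = k * (2 * (m' + 1)) :=
            hx _ _ (by omega)
          have hk3 : k ≤ k * (2 * (m' + 1) - (a + 1)) := Nat.le_mul_of_pos_right k (by omega)
          have h2m : k * (2 * (m' + 1)) = 2 * (k * (m' + 1)) := by ring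
          rw [if_neg h1, if_neg h2]
          have hset : (Finset.range (2 * (k * (m' + 1)) - 1)).filter
              (fun b => k * (a + 1) + (b + 1) < k * (m' + 1)
                ∨ 3 * (k * (m' + 1)) < k * (a + 1) + (b + 1))
              = Finset.Ico (3 * (k * (m' + 1)) - k * (a + 1)) (2 * (k * (m' + 1)) - 1) := by
            ext b
            simp only [Finset.mem_filter, Finset.mem_range, Finset.mem_Ico]
            omega
          rw [hset, Nat.card_Ico]
          omega
    rw [Finset.sum_congr rfl hterm]
    -- split the sum at m' + 1
    rw [Finset.range_eq_Ico,
      ← Finset.sum_Ico_consecutive _ (Nat.zero_le (m' + 1)) (by omega : m' + 1 ≤ 2 * (m' + 1) - 1),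
      ← Finset.range_eq_Ico, Finset.sum_range_succ, if_neg (lt_irrefl _), if_pos rfl,
      Finset.sum_Ico_eq_sum_range]
    have hlow : ∀ a ∈ Finset.range m',
        (if a + 1 < m' + 1 then k * (m' + 1) - k * (a + 1) - 1
          else if a + 1 = m' + 1 then 0 else k * (a + 1) - k * (m' + 1) - 1)
        = k * (m' + 1) - k * (a + 1) - 1 := by
      intro a ha
      rw [Finset.mem_range] at ha
      rw [if_pos (by omega)]
    rw [Finset.sum_congr rfl hlow]
    have hhigh : ∀ i ∈ Finset.range (2 * (m' + 1) - 1 - (m' + 1)),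
        (if m' + 1 + i + 1 < m' + 1 then k * (m' + 1) - k * (m' + 1 + i + 1) - 1
          else if m' + 1 + i + 1 = m' + 1 then 0
          else k * (m' + 1 + i + 1) - k * (m' + 1) - 1)
        = k * (i + 1) - 1 := by
      intro i hi
      rw [if_neg (by omega), if_neg (by omega)]
      have key : k * (m' + 1) + k * (i + 1) = k * (m' + 1 + i + 1) := by ring
      have hk2 : 1 ≤ k * (i + 1) := Nat.one_le_iff_ne_zero.mpr (by positivity)
      omega
    rw [Finset.sum_congr rfl hhigh]
    have hrefl := Finset.sum_range_reflect (fun a => k * (m' + 1) - k * (a + 1) - 1) m'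
    rw [← hrefl]
    have hlow2 : ∀ j ∈ Finset.range m',
        (fun a => k * (m' + 1) - k * (a + 1) - 1) (m' - 1 - j) = k * (j + 1) - 1 := by
      intro j hj
      rw [Finset.mem_range] at hj
      simp only
      have e1 : m' - 1 - j + 1 = m' - j := by omega
      rw [e1]
      have key : k * (m' - j) + k * (j + 1) = k * (m' + 1) := by
        rw [← Nat.mul_add]
        congr 1
        omega
      have hk2 : 1 ≤ k * (j + 1) := Nat.one_le_iff_ne_zero.mpr (by positivity)
      omega
    rw [Finset.sum_congr rfl hlow2]
    have hsa := sumAux k hk m'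
    rw [show 2 * (m' + 1) - 1 - (m' + 1) = m' by omega]
    omega
  -- ### totals and partitions
  have hScard : S.card = (p - 1) * (p * k - 1) := by
    show (Finset.range (p - 1) ×ˢ Finset.range (p * k - 1)).card = _
    rw [Finset.card_product, Finset.card_range, Finset.card_range]
  have hpart1 : (S.filter (fun ab => (ℓ ab).den = 1)).card
      + (S.filter (fun ab => ¬ (ℓ ab).den = 1)).card = S.card :=
    Finset.card_filter_add_card_filter_not _
  have hpart2 : (S.filter (fun ab => (ℓ ab).den ≠ 1 ∧ Even ⌊ℓ ab⌋)).card
      + (S.filter (fun ab => (ℓ ab).den ≠ 1 ∧ ¬ Even ⌊ℓ ab⌋)).card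
      = (S.filter (fun ab => ¬ (ℓ ab).den = 1)).card := by
    rw [← Finset.filter_filter, ← Finset.filter_filter]
    exact Finset.card_filter_add_card_filter_not _
  -- ### arithmetic facts
  have hd1 : (p - 2) / 2 = m' := by omega
  have hd2 : p * k / 2 = k * (m' + 1) := by omega
  have hd3 : (3 * p - 2) * p * k = 4 * ((3 * m' + 2) * (k * (m' + 1))) := by
    rw [show 3 * p - 2 = 2 * (3 * m' + 2) by omega, hm2]
    ring
  have hd4 : (3 * p - 2) * p * k / 4 = (3 * m' + 2) * (k * (m' + 1)) := by
    rw [hd3]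
    exact Nat.mul_div_cancel_left _ (by norm_num)
  have hQ2 : (3 * m' + 2) * (k * (m' + 1)) = 3 * (m' * (k * (m' + 1))) + 2 * (k * (m' + 1)) := by
    ring
  have hR : k * m' * (m' + 1) = m' * (k * (m' + 1)) := by ring
  have hz : (p - 1) * (p * k - 1) + (2 * m' + 1) =
      4 * (m' * (k * (m' + 1))) + 2 * (k * (m' + 1)) := by
    rw [show p - 1 = 2 * m' + 1 by omega, show p * k - 1 = 2 * (k * (m' + 1)) - 1 by omega]
    zify [show (1 : ℕ) ≤ 2 * (k * (m' + 1)) by omega]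
    ring
  have hP : m' * (k * (m' + 1) - 2) = m' * (k * (m' + 1)) - 2 * m' := by
    rw [Nat.mul_sub]
    omega
  have hR2 : 2 * m' ≤ m' * (k * (m' + 1)) := by
    rcases Nat.eq_zero_or_pos m' with rfl | hm'
    · simp
    · have h2 : 2 ≤ k * (m' + 1) := by omega
      have h3 : m' * 2 ≤ m' * (k * (m' + 1)) := Nat.mul_le_mul_left m' h2
      omega
  refine ⟨?_, ?_, ?_, ?_⟩
  · rw [hc0]; omega
  · rw [hcP, hd1, hd2]
    omega
  · omega
  · rw [hd1, hd2, hd4]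
    omega
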